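/- Closure of q-holonomic functions under rescaling q (Theorem 5.4(f)): let c be a nonzero integer. If f : ℤ^r → V is q-holonomic, then the function g = σ_V ∘ f : ℤ^r → V is q-holonomic. -/

import Mathlib

open scoped BigOperators

set_option maxHeartbeats 1000000
set_option synthInstance.maxHeartbeats 400000

noncomputable section

/-- The operator `M^α L^β` acting on functions `ℤ^r → V`:
`(M^α L^β f)(n) = q^(α·n) • f(n + β)`, where `q = X ∈ R = k(q) = RatFunc k`. -/
def shiftZ (k : Type) [Field k] {V : Type} [AddCommGroup V] [Module (RatFunc k) V]
    {r : ℕ} (α β : Fin r → ℕ) (f : (Fin r → ℤ) → V) : (Fin r → ℤ) → V :=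
  fun n => ((RatFunc.X : RatFunc k) ^ (∑ i, (α i : ℤ) * n i)) • f (fun i => n i + (β i : ℤ))

/-- The subspace `F_m f` spanned by the `M^α L^β f` with `|α| + |β| ≤ m`. -/
def FmZ (k : Type) [Field k] {V : Type} [AddCommGroup V] [Module (RatFunc k) V]
    {r : ℕ} (m : ℕ) (f : (Fin r → ℤ) → V) : Submodule (RatFunc k) ((Fin r → ℤ) → V) :=
  Submodule.span (RatFunc k)
    { g | ∃ α β : Fin r → ℕ, (∑ i, α i) + (∑ i, β i) ≤ m ∧ g = shiftZ k α β f }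

/-- `f : ℤ^r → V` is q-holonomic if each `F_m f` is finite dimensional over `R = k(q)`
and there is a constant `C` with `dim_R F_m f ≤ C (m+1)^r` for all `m`. -/
def IsQHolonomicZ (k : Type) [Field k] {V : Type} [AddCommGroup V] [Module (RatFunc k) V]
    {r : ℕ} (f : (Fin r → ℤ) → V) : Prop :=
  (∀ m : ℕ, FiniteDimensional (RatFunc k) (FmZ k m f)) ∧
  ∃ C : ℕ, ∀ m : ℕ, Module.finrank (RatFunc k) (FmZ k m f) ≤ C * (m + 1) ^ r

/-! ### Auxiliary material -/

section Aux

lemma zpow_mul_of_ne_zero {G₀ : Type*} [GroupWithZero G₀] {a : G₀} (ha : a ≠ 0) (m n : ℤ) :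
    a ^ (m * n) = (a ^ m) ^ n := by
  have := congrArg (Units.val) (zpow_mul (Units.mk0 a ha) m n)
  push_cast at this
  exact this

/-- Euclidean division adapted to our needs. -/
lemma exists_div_aux (c : ℤ) (hc : c ≠ 0) (m a : ℕ) (ha : a ≤ m) :
    ∃ (γ ρ : ℕ), γ ≤ 2 * m + 1 ∧ ρ < c.natAbs ∧
      (a : ℤ) = c * γ + ((ρ : ℤ) - c * m) := by
  set d : ℤ := (c.natAbs : ℤ) with hd
  have hd0 : 0 < d := by omega
  set x : ℤ := (a : ℤ) + c * m with hxdef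
  have h0 : 0 ≤ x % d := Int.emod_nonneg x hd0.ne'
  have h1 : x % d < d := Int.emod_lt_of_pos x hd0
  have hx : d * (x / d) + x % d = x := Int.mul_ediv_add_emod x d
  have ham : (a : ℤ) ≤ m := by exact_mod_cast ha
  have ha0 : (0 : ℤ) ≤ a := Int.natCast_nonneg a
  have hm0 : (0 : ℤ) ≤ m := Int.natCast_nonneg m
  have key : ∃ γℤ : ℤ, 0 ≤ γℤ ∧ γℤ ≤ 2 * m + 1 ∧ c * γℤ + x % d = x := by
    rcases hc.lt_or_gt with hneg | hpos
    · -- c < 0, d = -c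
      have hdc : d = -c := by omega
      have hcm : c * (m : ℤ) ≤ (-1) * m :=
        mul_le_mul_of_nonneg_right (by omega) hm0
      have hx0 : x ≤ 0 := by rw [hxdef]; linarith
      have hq0 : x / d ≤ 0 := by simpa using Int.ediv_le_ediv hd0 hx0
      have hlow : d * -(2 * (m : ℤ) + 1) ≤ x := by
        have h5 : c * (2 * (m : ℤ) + 1) ≤ c * m :=
          mul_le_mul_of_nonpos_left (by omega) hneg.le
        have h6 : c * (m : ℤ) ≤ x := by rw [hxdef]; linarith
        rw [hdc]; linarith
      have hqlb : -(2 * (m : ℤ) + 1) ≤ x / d := by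
        have := Int.ediv_le_ediv hd0 hlow
        rwa [Int.mul_ediv_cancel_left _ hd0.ne'] at this
      refine ⟨-(x / d), by omega, by omega, ?_⟩
      have h7 : c * -(x / d) = d * (x / d) := by rw [hdc]; ring
      rw [h7]; exact hx
    · -- 0 < c, d = c
      have hdc : d = c := by omega
      have hx0 : 0 ≤ x := by
        have : (0 : ℤ) ≤ c * m := mul_nonneg hpos.le hm0
        rw [hxdef]; linarith
      have hq0 : 0 ≤ x / d := Int.ediv_nonneg hx0 hd0.le
      have hqub : x / d ≤ 2 * m + 1 := by
        have hup : x ≤ d * (2 * (m : ℤ) + 1) := by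
          rw [hdc, hxdef]
          nlinarith [mul_nonneg (by omega : (0:ℤ) ≤ c - 1) hm0]
        have := Int.ediv_le_ediv hd0 hup
        rwa [Int.mul_ediv_cancel_left _ hd0.ne'] at this
      refine ⟨x / d, hq0, hqub, ?_⟩
      rw [← hdc]; exact hx
  obtain ⟨γℤ, hγ0, hγub, hγeq⟩ := key
  have hx2 : x = (a : ℤ) + c * m := hxdef
  refine ⟨γℤ.toNat, (x % d).toNat, by omega, by omega, ?_⟩
  rw [Int.toNat_of_nonneg hγ0, Int.toNat_of_nonneg h0]
  linarith [hγeq]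

variable {k : Type} [Field k] {V₀ : Type} [AddCommGroup V₀] [Module k V₀]

open TensorProduct

lemma rTensor_ratfunc_smul (σ : RatFunc k →ₐ[k] RatFunc k) (a : RatFunc k)
    (v : RatFunc k ⊗[k] V₀) :
    LinearMap.rTensor V₀ σ.toLinearMap (a • v)
      = σ a • LinearMap.rTensor V₀ σ.toLinearMap v := by
  induction v using TensorProduct.induction_on with
  | zero => simp
  | tmul x y =>
      rw [smul_tmul', smul_eq_mul, LinearMap.rTensor_tmul, LinearMap.rTensor_tmul,
        AlgHom.toLinearMap_apply, AlgHom.toLinearMap_apply, map_mul, smul_tmul', smul_eq_mul]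
  | add u w hu hw => rw [smul_add, map_add, map_add, smul_add, hu, hw]

/-- The multiplication operator `h ↦ (n ↦ X^{ρ·n} • h n)` as a linear map. -/
def mulOp (k : Type) [Field k] {V : Type} [AddCommGroup V] [Module (RatFunc k) V]
    {r : ℕ} (ρ : Fin r → ℤ) :
    ((Fin r → ℤ) → V) →ₗ[RatFunc k] ((Fin r → ℤ) → V) where
  toFun h := fun n => ((RatFunc.X : RatFunc k) ^ (∑ i, ρ i * n i)) • h n
  map_add' h₁ h₂ := by funext n; simp [smul_add]
  map_smul' a h := by
    funext n
    simp only [Pi.smul_apply, RingHom.id_apply, smul_smul, mul_comm]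

lemma phi_mem_span (σ : RatFunc k →ₐ[k] RatFunc k) {r : ℕ}
    {S : Set ((Fin r → ℤ) → RatFunc k ⊗[k] V₀)} {h : (Fin r → ℤ) → RatFunc k ⊗[k] V₀}
    (hh : h ∈ Submodule.span (RatFunc k) S) :
    (fun n => LinearMap.rTensor V₀ σ.toLinearMap (h n)) ∈
      Submodule.span (RatFunc k)
        ((fun h : (Fin r → ℤ) → RatFunc k ⊗[k] V₀ =>
            fun n => LinearMap.rTensor V₀ σ.toLinearMap (h n)) '' S) := by
  induction hh using Submodule.span_induction with
  | mem x hx => exact Submodule.subset_span ⟨x, hx, rfl⟩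
  | zero =>
      have : (fun n : Fin r → ℤ => LinearMap.rTensor V₀ σ.toLinearMap ((0 : (Fin r → ℤ) → RatFunc k ⊗[k] V₀) n))
          = 0 := by funext n; simp
      rw [this]; exact Submodule.zero_mem _
  | add x y hx hy ihx ihy =>
      have : (fun n => LinearMap.rTensor V₀ σ.toLinearMap ((x + y) n))
          = (fun n => LinearMap.rTensor V₀ σ.toLinearMap (x n))
            + (fun n => LinearMap.rTensor V₀ σ.toLinearMap (y n)) := by
        funext n; simp
      rw [this]; exact Submodule.add_mem _ ihx ihy
  | smul a x hx ih =>
      have : (fun n => LinearMap.rTensor V₀ σ.toLinearMap ((a • x) n))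
          = σ a • fun n => LinearMap.rTensor V₀ σ.toLinearMap (x n) := by
        funext n
        simp only [Pi.smul_apply]
        rw [rTensor_ratfunc_smul]
      rw [this]; exact Submodule.smul_mem _ _ ih

/-- The key pointwise identity. -/
lemma gen_eq {c : ℤ} (σ : RatFunc k →ₐ[k] RatFunc k) (hσ : σ RatFunc.X = RatFunc.X ^ c)
    {r : ℕ} (α β γ : Fin r → ℕ) (ρ : Fin r → ℤ)
    (hαγ : ∀ i, (α i : ℤ) = c * γ i + ρ i)
    (f : (Fin r → ℤ) → RatFunc k ⊗[k] V₀) :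
    shiftZ k α β (fun n => LinearMap.rTensor V₀ σ.toLinearMap (f n))
      = mulOp k ρ (fun n => LinearMap.rTensor V₀ σ.toLinearMap (shiftZ k γ β f n)) := by
  funext n
  show ((RatFunc.X : RatFunc k) ^ (∑ i, (α i : ℤ) * n i)) •
      (LinearMap.rTensor V₀ σ.toLinearMap (f fun i => n i + (β i : ℤ)))
    = ((RatFunc.X : RatFunc k) ^ (∑ i, ρ i * n i)) •
      (LinearMap.rTensor V₀ σ.toLinearMap
        (((RatFunc.X : RatFunc k) ^ (∑ i, (γ i : ℤ) * n i)) • f fun i => n i + (β i : ℤ)))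
  have hsum : (∑ i, (α i : ℤ) * n i)
      = (∑ i, ρ i * n i) + c * (∑ i, (γ i : ℤ) * n i) := by
    rw [Finset.mul_sum, ← Finset.sum_add_distrib]
    exact Finset.sum_congr rfl fun i _ => by rw [hαγ i]; ring
  rw [rTensor_ratfunc_smul, map_zpow₀, hσ, ← zpow_mul_of_ne_zero RatFunc.X_ne_zero,
    smul_smul, ← zpow_add₀ (RatFunc.X_ne_zero (K := k)), hsum]

end Aux

open TensorProduct in
/-- Theorem 5.4(f): closure under rescaling `q ↦ q^c`. Here `V = k(q) ⊗_k V₀`,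
`σ : k(q) → k(q)` is the field embedding fixing `k` with `σ(q) = q^c` (`c ≠ 0` an
integer), encoded as a `k`-algebra homomorphism, and `σ_V = σ ⊗ id_{V₀}`. If `f` is
q-holonomic then so is `σ_V ∘ f`. -/
theorem qholonomic_rescale (k : Type) [Field k] [CharZero k] (V₀ : Type)
    [AddCommGroup V₀] [Module k V₀] {r : ℕ} (hr : 1 ≤ r)
    (c : ℤ) (hc : c ≠ 0)
    (σ : RatFunc k →ₐ[k] RatFunc k) (hσ : σ RatFunc.X = RatFunc.X ^ c)
    (f : (Fin r → ℤ) → (RatFunc k ⊗[k] V₀)) (hf : IsQHolonomicZ k f) :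
    IsQHolonomicZ k (fun n => LinearMap.rTensor V₀ σ.toLinearMap (f n)) := by
  obtain ⟨hfd, C, hC⟩ := hf
  set g : (Fin r → ℤ) → RatFunc k ⊗[k] V₀ :=
    fun n => LinearMap.rTensor V₀ σ.toLinearMap (f n) with hg
  -- For each m, F_m g is contained in the span of an explicit finite family.
  have key : ∀ m : ℕ, ∃ (D : ℕ) (e : (Fin r → Fin c.natAbs) × Fin D →
        ((Fin r → ℤ) → RatFunc k ⊗[k] V₀)),
      D ≤ C * ((2 * r + 2) * (m + 1) + 1) ^ r ∧
      FmZ k m g ≤ Submodule.span (RatFunc k) (Set.range e) := by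
    intro m
    set M : ℕ := (2 * r + 2) * (m + 1) with hM
    haveI := hfd M
    set D : ℕ := Module.finrank (RatFunc k) (FmZ k M f) with hD
    let bas := Module.finBasis (RatFunc k) (FmZ k M f)
    let b : Fin D → ((Fin r → ℤ) → RatFunc k ⊗[k] V₀) := fun j => (bas j).1
    have hbspan : FmZ k M f = Submodule.span (RatFunc k) (Set.range b) := by
      have h1 : FmZ k M f = Submodule.map (FmZ k M f).subtype ⊤ :=
        (Submodule.map_subtype_top _).symm
      rw [h1, ← bas.span_eq, Submodule.map_span]
      congr 1
      ext x
      simp [b, Set.range_comp]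
      exact Iff.rfl
    let e : (Fin r → Fin c.natAbs) × Fin D → ((Fin r → ℤ) → RatFunc k ⊗[k] V₀) :=
      fun p => mulOp k (fun i => ((p.1 i : ℕ) : ℤ) - c * m)
        (fun n => LinearMap.rTensor V₀ σ.toLinearMap (b p.2 n))
    refine ⟨D, e, hC M, ?_⟩
    rw [FmZ, Submodule.span_le]
    rintro x ⟨α, β, hm, rfl⟩
    -- construct the division data
    have hchoice : ∀ i, ∃ (γ ρ : ℕ), γ ≤ 2 * m + 1 ∧ ρ < c.natAbs ∧
        (α i : ℤ) = c * γ + ((ρ : ℤ) - c * m) := by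
      intro i
      apply exists_div_aux c hc m (α i)
      calc α i ≤ ∑ j, α j := Finset.single_le_sum (fun j _ => Nat.zero_le _) (Finset.mem_univ i)
        _ ≤ m := le_trans (Nat.le_add_right _ _) hm
    choose γ ρ hγub hρlt hαeq using hchoice
    set ρidx : Fin r → Fin c.natAbs := fun i => ⟨ρ i, hρlt i⟩ with hρidx
    have hsum : (∑ i, γ i) + (∑ i, β i) ≤ M := by
      have h1 : (∑ i, γ i) ≤ r * (2 * m + 1) := by
        calc (∑ i, γ i) ≤ ∑ _i : Fin r, (2 * m + 1) := Finset.sum_le_sum fun i _ => hγub i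
          _ = r * (2 * m + 1) := by simp [Finset.sum_const, mul_comm]
      have h2 : (∑ i, β i) ≤ m := le_trans (Nat.le_add_left _ _) hm
      have : r * (2 * m + 1) + m ≤ (2 * r + 2) * (m + 1) := by nlinarith
      omega
    have hmem : shiftZ k γ β f ∈ Submodule.span (RatFunc k) (Set.range b) := by
      rw [← hbspan]
      exact Submodule.subset_span ⟨γ, β, hsum, rfl⟩
    have hphi := phi_mem_span σ hmem
    have happ := Submodule.apply_mem_span_image_of_mem_span
      (mulOp k (fun i => ((ρidx i : ℕ) : ℤ) - c * m)) hphi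
    have heq : shiftZ k α β g
        = mulOp k (fun i => ((ρidx i : ℕ) : ℤ) - c * m)
          (fun n => LinearMap.rTensor V₀ σ.toLinearMap (shiftZ k γ β f n)) := by
      apply gen_eq σ hσ
      intro i
      have := hαeq i
      simpa [hρidx] using this
    rw [heq]
    refine Submodule.span_le.mpr ?_ happ
    rintro y ⟨-, ⟨z, ⟨j, rfl⟩, rfl⟩, rfl⟩
    exact Submodule.subset_span ⟨(ρidx, j), rfl⟩
  constructor
  · intro m
    obtain ⟨D, e, hDle, hle⟩ := key m
    haveI : FiniteDimensional (RatFunc k) (Submodule.span (RatFunc k) (Set.range e)) :=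
      FiniteDimensional.span_of_finite _ (Set.finite_range e)
    exact Submodule.finiteDimensional_of_le hle
  · refine ⟨c.natAbs ^ r * C * (2 * r + 3) ^ r, fun m => ?_⟩
    obtain ⟨D, e, hDle, hle⟩ := key m
    haveI : FiniteDimensional (RatFunc k) (Submodule.span (RatFunc k) (Set.range e)) :=
      FiniteDimensional.span_of_finite _ (Set.finite_range e)
    have h1 : Module.finrank (RatFunc k) (FmZ k m g)
        ≤ Module.finrank (RatFunc k) (Submodule.span (RatFunc k) (Set.range e)) :=
      Submodule.finrank_mono hle
    have h2 : Module.finrank (RatFunc k) (Submodule.span (RatFunc k) (Set.range e))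
        ≤ Fintype.card ((Fin r → Fin c.natAbs) × Fin D) := finrank_range_le_card e
    have h3 : Fintype.card ((Fin r → Fin c.natAbs) × Fin D) = c.natAbs ^ r * D := by
      simp [Fintype.card_prod, Fintype.card_fun]
    have h4 : (2 * r + 2) * (m + 1) + 1 ≤ (2 * r + 3) * (m + 1) := by nlinarith
    calc Module.finrank (RatFunc k) (FmZ k m g)
        ≤ c.natAbs ^ r * D := by rw [← h3]; exact le_trans h1 h2
      _ ≤ c.natAbs ^ r * (C * ((2 * r + 2) * (m + 1) + 1) ^ r) :=
          Nat.mul_le_mul_left _ hDle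
      _ ≤ c.natAbs ^ r * (C * ((2 * r + 3) * (m + 1)) ^ r) := by
          exact Nat.mul_le_mul_left _ (Nat.mul_le_mul_left _ (Nat.pow_le_pow_left h4 r))
      _ = c.natAbs ^ r * C * (2 * r + 3) ^ r * (m + 1) ^ r := by
          rw [Nat.mul_pow]; ring
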